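/- Let G be a local amoeba with minimum degree δ and maximum degree Δ. Then for every integer r with δ ≤ r ≤ Δ, there exists a vertex v of G with deg(v) = r. -/

import Mathlib

open SimpleGraph Equiv

/-- The labeled copy `G_σ`, with edges `v_{σ⁻¹ i} v_{σ⁻¹ j}` for edges `v_i v_j` of `G`. -/
def copyG {V : Type*} (G : SimpleGraph V) (σ : Equiv.Perm V) : SimpleGraph V where
  Adj a b := G.Adj (σ a) (σ b)
  symm := ⟨fun _ _ h => G.adj_symm h⟩
  loopless := ⟨fun _ h => G.irrefl h⟩

/-- The graph `G - v_r v_s + v_k v_l`. -/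
def replaceG {V : Type*} (G : SimpleGraph V) (r s k l : V) : SimpleGraph V :=
  SimpleGraph.fromEdgeSet ((G.edgeSet \ {s(r, s)}) ∪ {s(k, l)})

/-- The edge-replacement `rs → kl` is feasible: `v_r v_s ∈ E(G)`, `v_k v_l` is a non-edge or
`{k,l} = {r,s}`, and `G - v_r v_s + v_k v_l ≅ G`. -/
def IsFeasible {V : Type*} (G : SimpleGraph V) (r s k l : V) : Prop :=
  G.Adj r s ∧ (Gᶜ.Adj k l ∨ s(k, l) = s(r, s)) ∧ Nonempty (replaceG G r s k l ≃g G)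

/-- The permutations realizing feasible edge-replacements of `G`. -/
def feasiblePerms {V : Type*} (G : SimpleGraph V) : Set (Equiv.Perm V) :=
  {σ | ∃ r s k l, IsFeasible G r s k l ∧ copyG G σ = replaceG G r s k l}

/-- The group `S_G` generated by all permutations realizing feasible edge-replacements. -/
def ampGroup {V : Type*} (G : SimpleGraph V) : Subgroup (Equiv.Perm V) :=
  Subgroup.closure (feasiblePerms G)

/-- `G` is a local amoeba if `S_G` is the full symmetric group. -/
def LocalAmoeba {V : Type*} (G : SimpleGraph V) : Prop := ampGroup G = ⊤

/-- Disjoint union of two graphs. -/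
def sumGraph {V W : Type*} (H : SimpleGraph V) (H' : SimpleGraph W) : SimpleGraph (V ⊕ W) :=
  SimpleGraph.map Sum.inl H ⊔ SimpleGraph.map Sum.inr H'

/-- `G` together with `t` additional isolated vertices. -/
def addIsolated {V : Type*} (G : SimpleGraph V) (t : ℕ) : SimpleGraph (V ⊕ Fin t) :=
  sumGraph G (⊥ : SimpleGraph (Fin t))

/-- `G` is a global amoeba if `G ∪ tK₁` is a local amoeba for all sufficiently large `t`. -/
def GlobalAmoeba {V : Type*} (G : SimpleGraph V) : Prop :=
  ∃ T : ℕ, ∀ t ≥ T, LocalAmoeba (addIsolated G t)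

lemma degree_eq_ncard' {V : Type*} [Fintype V] (G : SimpleGraph V) [DecidableRel G.Adj] (v : V) :
    G.degree v = (G.neighborSet v).ncard := by
  rw [Set.ncard_eq_toFinset_card']; rfl

lemma replaceG_adj {V : Type*} (G : SimpleGraph V) (r s k l a b : V) :
    (replaceG G r s k l).Adj a b ↔
      ((G.Adj a b ∧ s(a, b) ≠ s(r, s)) ∨ s(a, b) = s(k, l)) ∧ a ≠ b := by
  simp [replaceG, SimpleGraph.fromEdgeSet_adj, Set.mem_diff, and_comm]
  tauto

lemma feasible_degree_bound {V : Type*} [Fintype V] (G : SimpleGraph V) [DecidableRel G.Adj]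
    {σ : Equiv.Perm V} (hσ : σ ∈ feasiblePerms G) (v : V) :
    G.degree (σ v) ≤ G.degree v + 1 ∧ G.degree v ≤ G.degree (σ v) + 1 := by
  classical
  obtain ⟨r, s, k, l, ⟨hrs, hkl, -⟩, hcopy⟩ := hσ
  have hkl' : k ≠ l := by
    rcases hkl with h | h
    · exact h.ne
    · rcases Sym2.eq_iff.mp h with ⟨hk, hl⟩ | ⟨hk, hl⟩
      · exact fun he => hrs.ne (hk.symm.trans (he.trans hl))
      · exact fun he => hrs.ne' (hk.symm.trans (he.trans hl))
  set N : Set V := G.neighborSet v with hN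
  set M : Set V := (replaceG G r s k l).neighborSet v with hM
  -- degree of σ v equals ncard of M
  have hdeg : G.degree (σ v) = M.ncard := by
    have h1 : (copyG G σ).neighborSet v = σ ⁻¹' (G.neighborSet (σ v)) := rfl
    have h2 : ((copyG G σ).neighborSet v).ncard = (G.neighborSet (σ v)).ncard := by
      rw [h1, ← Equiv.image_symm_eq_preimage]
      exact Set.ncard_image_of_injective _ σ.symm.injective
    rw [degree_eq_ncard', ← h2, hcopy]
  -- M ⊆ N ∪ {x}
  set x : V := if v = k then l else k with hx
  have hMsub : M ⊆ N ∪ {x} := by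
    intro b hb
    rw [hM, SimpleGraph.mem_neighborSet, replaceG_adj] at hb
    obtain ⟨⟨hadj, -⟩ | heq, -⟩ := hb
    · exact Or.inl hadj
    · right
      rcases Sym2.eq_iff.mp heq with ⟨hv, hb'⟩ | ⟨hv, hb'⟩
      · have : x = l := by rw [hx, if_pos hv]
        simp [this, hb']
      · have hvk : v ≠ k := fun h => hkl' (h.symm.trans hv)
        have : x = k := by rw [hx, if_neg hvk]
        simp [this, hb']
  -- N \ {y} ⊆ M
  set y : V := if v = r then s else r with hy
  have hNsub : N \ {y} ⊆ M := by
    intro b hb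
    obtain ⟨hbN, hbny⟩ := hb
    rw [hN, SimpleGraph.mem_neighborSet] at hbN
    rw [hM, SimpleGraph.mem_neighborSet, replaceG_adj]
    refine ⟨Or.inl ⟨hbN, ?_⟩, hbN.ne⟩
    intro heq
    rcases Sym2.eq_iff.mp heq with ⟨hv, hb'⟩ | ⟨hv, hb'⟩
    · refine hbny ?_
      have : y = s := by rw [hy, if_pos hv]
      simp [this, hb']
    · refine hbny ?_
      have hvr : v ≠ r := fun h => hrs.ne (h.symm.trans hv)
      have : y = r := by rw [hy, if_neg hvr]
      simp [this, hb']
  have hNfin : N.Finite := Set.toFinite _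
  have hMfin : M.Finite := Set.toFinite _
  constructor
  · rw [hdeg, degree_eq_ncard']
    calc M.ncard ≤ (N ∪ {x}).ncard := Set.ncard_le_ncard hMsub (Set.toFinite _)
    _ ≤ N.ncard + ({x} : Set V).ncard := Set.ncard_union_le _ _
    _ = N.ncard + 1 := by rw [Set.ncard_singleton]
  · rw [hdeg, degree_eq_ncard']
    have : N ⊆ M ∪ {y} := by
      intro b hb
      by_cases hby : b = y
      · exact Or.inr (by simp [hby])
      · exact Or.inl (hNsub ⟨hb, by simpa using hby⟩)
    calc N.ncard ≤ (M ∪ {y}).ncard := Set.ncard_le_ncard this (Set.toFinite _)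
    _ ≤ M.ncard + ({y} : Set V).ncard := Set.ncard_union_le _ _
    _ = M.ncard + 1 := by rw [Set.ncard_singleton]

theorem stmt7 {V : Type*} [Fintype V] [Nonempty V] (G : SimpleGraph V) [DecidableRel G.Adj]
    (hG : LocalAmoeba G) (r : ℕ) (hmin : G.minDegree ≤ r) (hmax : r ≤ G.maxDegree) :
    ∃ v : V, G.degree v = r := by
  classical
  by_contra hno
  push_neg at hno
  obtain ⟨a, ha⟩ := G.exists_minimal_degree_vertex
  obtain ⟨b, hb⟩ := G.exists_maximal_degree_vertex
  have ha' : G.degree a < r := lt_of_le_of_ne (ha ▸ hmin) (hno a)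
  have hb' : r < G.degree b := lt_of_le_of_ne (hb ▸ hmax) (Ne.symm (hno b))
  have key : ∀ σ ∈ ampGroup G, ∀ v : V, (G.degree (σ v) < r ↔ G.degree v < r) := by
    intro σ hσ
    refine Subgroup.closure_induction ?_ ?_ ?_ ?_ hσ
    · intro τ hτ v
      have h1 := feasible_degree_bound G hτ v
      have h2 := hno v
      have h3 := hno (τ v)
      omega
    · intro v; rfl
    · intro τ π _ _ hτ hπ v
      rw [Equiv.Perm.mul_apply]
      exact (hτ (π v)).trans (hπ v)
    · intro τ _ hτ v
      have := hτ (τ⁻¹ v)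
      rw [show τ (τ⁻¹ v) = v from τ.apply_symm_apply v] at this
      exact this.symm
  have hswap : Equiv.swap a b ∈ ampGroup G := by
    rw [hG]; exact Subgroup.mem_top _
  have := key _ hswap a
  rw [Equiv.swap_apply_left] at this
  omega
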